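/- Let I be a fine normal ideal on κ and θ ≤ κ a regular uncountable cardinal. Suppose there is a family D of I-positive subsets of κ such that: (dense) every I-positive set has a subset belonging to D, and (<θ-closed) for every ordinal δ < θ and every ⊆-decreasing sequence (D_ε)_{ε<δ} of members of D there is a member of D contained in every D_ε. Then nonempty has a winning strategy in the Banach–Mazur game BM_{<θ}(I,S) for every I-positive set S ⊆ κ, and consequently nonempty has a winning strategy in the pressing down game PD_{<θ}(NS,S), where NS is the nonstationary ideal on κ. -/

import Mathlib

open Set

noncomputable section

namespace BMPDGames

/-- `I` is an ideal on the (regular uncountable) ordinal `κ`:  a collection of subsets of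
`κ` containing all singletons, closed under subsets and finite unions, with `κ ∉ I`. -/
def IsIdealOn (κ : Ordinal) (I : Set (Set Ordinal)) : Prop :=
  (∀ A ∈ I, A ⊆ Set.Iio κ) ∧
  (∀ β < κ, ({β} : Set Ordinal) ∈ I) ∧
  (∀ A B : Set Ordinal, A ⊆ B → B ∈ I → A ∈ I) ∧
  (∀ A ∈ I, ∀ B ∈ I, A ∪ B ∈ I) ∧
  Set.Iio κ ∉ I

/-- `I` is fine: every bounded subset of `κ` belongs to `I`. -/
def IsFineIdeal (κ : Ordinal) (I : Set (Set Ordinal)) : Prop :=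
  ∀ A : Set Ordinal, A ⊆ Set.Iio κ → (∃ β < κ, A ⊆ Set.Iio β) → A ∈ I

/-- `I` is normal: the diagonal union of `κ` many members of `I` belongs to `I`. -/
def IsNormalIdeal (κ : Ordinal) (I : Set (Set Ordinal)) : Prop :=
  ∀ A : Ordinal → Set Ordinal, (∀ γ, γ < κ → A γ ∈ I) →
    {β : Ordinal | β < κ ∧ ∃ γ < β, β ∈ A γ} ∈ I

/-- `I` is a fine normal ideal on `κ`. -/
def FineNormalIdeal (κ : Ordinal) (I : Set (Set Ordinal)) : Prop :=
  IsIdealOn κ I ∧ IsFineIdeal κ I ∧ IsNormalIdeal κ I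

/-- `κ` is (as an ordinal) a regular uncountable cardinal. -/
def RegUncountable (κ : Ordinal) : Prop :=
  κ.card.IsRegular ∧ Cardinal.aleph0 < κ.card ∧ κ.card.ord = κ

/-- `C` is a club (closed unbounded) subset of `κ`: it is closed under suprema of its
bounded nonempty subsets and unbounded in `κ`. -/
def IsClubIn (κ : Ordinal) (C : Set Ordinal) : Prop :=
  C ⊆ Set.Iio κ ∧
  (∀ D : Set Ordinal, D ⊆ C → D.Nonempty → sSup D < κ → sSup D ∈ C) ∧
  (∀ β, β < κ → ∃ γ ∈ C, β < γ)

/-- `S` is a stationary subset of `κ`: it meets every club. -/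
def IsStationaryIn (κ : Ordinal) (S : Set Ordinal) : Prop :=
  S ⊆ Set.Iio κ ∧ ∀ C : Set Ordinal, IsClubIn κ C → (S ∩ C).Nonempty

/-- The nonstationary ideal on `κ`: subsets of `κ` disjoint from some club. -/
def NSIdeal (κ : Ordinal) : Set (Set Ordinal) :=
  {A | A ⊆ Set.Iio κ ∧ ∃ C : Set Ordinal, IsClubIn κ C ∧ A ∩ C = ∅}

/-- `E^κ_ω`, the set of ordinals below `κ` of cofinality `ω`. -/
def Ecofomega (κ : Ordinal) : Set Ordinal :=
  {α : Ordinal | α < κ ∧ Ordinal.cof α = Cardinal.aleph0}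

/-- The intersection of the values `T β` for `β < α`. -/
def InterBelow (T : Ordinal → Set Ordinal) (α : Ordinal) : Set Ordinal :=
  ⋂ β ∈ Set.Iio α, T β

/-! ### The Banach–Mazur game `BM_{<ζ}(I,S)` (empty moves first at every stage).

A strategy for a player is represented as a function giving that player's move at stage `α`
as a function of the opponent's moves (it may only depend on the moves made before the
player's move at stage `α`, which is the first conjunct in each definition below).  A
strategy is winning if it always produces legal moves (as long as the opponent has played
legally and the game is not yet over) and every run in which the opponent plays legally is
won by the player. -/

/-- `σ` is a winning strategy for the player *empty* in `BM_{<ζ}(I,S)`.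
Here `T : Ordinal → Set Ordinal` ranges over the sequences of moves of nonempty, and
empty's move at stage `α` is `σ α T`. Empty wins a run iff at some stage `α < ζ`
the intersection of all moves made before stage `α` belongs to `I`. -/
def EmptyBMStratWins (ζ : Ordinal) (I : Set (Set Ordinal)) (S : Set Ordinal)
    (σ : Ordinal → (Ordinal → Set Ordinal) → Set Ordinal) : Prop :=
  (∀ (α : Ordinal) (T T' : Ordinal → Set Ordinal),
      (∀ β < α, T β = T' β) → σ α T = σ α T') ∧
  ∀ T : Ordinal → Set Ordinal,
    (∀ α < ζ, (∀ β < α, T β ∉ I ∧ T β ⊆ σ β T) → InterBelow T α ∉ I →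
      σ α T ∉ I ∧ σ α T ⊆ S ∧ ∀ β < α, σ α T ⊆ T β) ∧
    ((∀ α < ζ, T α ∉ I ∧ T α ⊆ σ α T) → ∃ α < ζ, InterBelow T α ∈ I)

/-- Empty has a winning strategy in `BM_{<ζ}(I,S)`. -/
def EmptyWinsBM (ζ : Ordinal) (I : Set (Set Ordinal)) (S : Set Ordinal) : Prop :=
  ∃ σ, EmptyBMStratWins ζ I S σ

/-- Nonempty has a winning strategy in `BM_{<ζ}(I,S)`.
Here `Sq : Ordinal → Set Ordinal` ranges over the sequences of moves of empty, and
nonempty's move at stage `α` is `τ α Sq`.  The strategy must respond legally to legal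
play by empty, and guarantee that empty is never stuck, i.e. that the intersection of
all previous moves never lies in `I` at any stage `α < ζ`. -/
def NonemptyWinsBM (ζ : Ordinal) (I : Set (Set Ordinal)) (S : Set Ordinal) : Prop :=
  ∃ τ : Ordinal → (Ordinal → Set Ordinal) → Set Ordinal,
    (∀ (α : Ordinal) (Sq Sq' : Ordinal → Set Ordinal),
        (∀ β ≤ α, Sq β = Sq' β) → τ α Sq = τ α Sq') ∧
    ∀ Sq : Ordinal → Set Ordinal, ∀ α, α < ζ →
      ((∀ β ≤ α, Sq β ∉ I ∧ Sq β ⊆ S ∧ ∀ γ < β, Sq β ⊆ Sq γ ∩ τ γ Sq) →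
        τ α Sq ∉ I ∧ τ α Sq ⊆ Sq α) ∧
      ((∀ β < α, Sq β ∉ I ∧ Sq β ⊆ S ∧ ∀ γ < β, Sq β ⊆ Sq γ ∩ τ γ Sq) →
        InterBelow (fun β => Sq β ∩ τ β Sq) α ∉ I)

/-! ### The variant `BM'_{<ζ}(I,S)` in which nonempty makes the first move at stage `0`
(playing an `I`-positive `T 0 ⊆ S`), after which play continues as in `BM` with empty
moving first at every later stage. -/

/-- `σ` is a winning strategy for empty in `BM'_{<ζ}(I,S)` (`σ` is only used at
stages `α > 0`, since nonempty alone moves at stage `0`). -/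
def EmptyBMPrimeStratWins (ζ : Ordinal) (I : Set (Set Ordinal)) (S : Set Ordinal)
    (σ : Ordinal → (Ordinal → Set Ordinal) → Set Ordinal) : Prop :=
  (∀ (α : Ordinal) (T T' : Ordinal → Set Ordinal),
      (∀ β < α, T β = T' β) → σ α T = σ α T') ∧
  ∀ T : Ordinal → Set Ordinal,
    (∀ α, 0 < α → α < ζ → (T 0 ∉ I ∧ T 0 ⊆ S) →
      (∀ β, 0 < β → β < α → T β ∉ I ∧ T β ⊆ σ β T) → InterBelow T α ∉ I →
      σ α T ∉ I ∧ ∀ β < α, σ α T ⊆ T β) ∧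
    ((0 < ζ → T 0 ∉ I ∧ T 0 ⊆ S) → (∀ α, 0 < α → α < ζ → T α ∉ I ∧ T α ⊆ σ α T) →
      ∃ α < ζ, InterBelow T α ∈ I)

/-- Empty has a winning strategy in `BM'_{<ζ}(I,S)`. -/
def EmptyWinsBMPrime (ζ : Ordinal) (I : Set (Set Ordinal)) (S : Set Ordinal) : Prop :=
  ∃ σ, EmptyBMPrimeStratWins ζ I S σ

/-- Nonempty has a winning strategy in `BM'_{<ζ}(I,S)`: a first move `T0` (an
`I`-positive subset of `S`, provided the game has any stage at all) together with
responses `τ α Sq` to empty's moves `Sq β` (`0 < β ≤ α`) at all later stages `α`. -/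
def NonemptyWinsBMPrime (ζ : Ordinal) (I : Set (Set Ordinal)) (S : Set Ordinal) : Prop :=
  ∃ T0 : Set Ordinal, ∃ τ : Ordinal → (Ordinal → Set Ordinal) → Set Ordinal,
    (0 < ζ → T0 ∉ I ∧ T0 ⊆ S) ∧
    (∀ (α : Ordinal) (Sq Sq' : Ordinal → Set Ordinal),
        (∀ β ≤ α, Sq β = Sq' β) → τ α Sq = τ α Sq') ∧
    ∀ Sq : Ordinal → Set Ordinal, ∀ α, 0 < α → α < ζ →
      ((∀ β, 0 < β → β ≤ α →
          Sq β ∉ I ∧ Sq β ⊆ T0 ∧ ∀ γ, 0 < γ → γ < β → Sq β ⊆ Sq γ ∩ τ γ Sq) →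
        τ α Sq ∉ I ∧ τ α Sq ⊆ Sq α) ∧
      ((∀ β, 0 < β → β < α →
          Sq β ∉ I ∧ Sq β ⊆ T0 ∧ ∀ γ, 0 < γ → γ < β → Sq β ⊆ Sq γ ∩ τ γ Sq) →
        (T0 ∩ ⋂ β ∈ Set.Ioo (0 : Ordinal) α, (Sq β ∩ τ β Sq)) ∉ I)

/-! ### The pressing down game `PD_{<ζ}(I,S)`.

At each stage `α < ζ` empty plays a regressive function `f_α : κ → κ` and nonempty plays
a set `T_α ⊆ S` contained in all previous `T_β` on which `f_α` is constant.  Empty wins a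
run iff `T_α ∈ I` for some `α < ζ`. -/

/-- Empty has a winning strategy in `PD_{<ζ}(I,S)`: a (history-dependent) choice of
regressive functions such that in every run in which nonempty plays legally, some move
of nonempty lies in `I`. -/
def EmptyWinsPD (ζ : Ordinal) (I : Set (Set Ordinal)) (S : Set Ordinal) : Prop :=
  ∃ σ : Ordinal → (Ordinal → Set Ordinal) → (Ordinal → Ordinal),
    (∀ (α : Ordinal) (T T' : Ordinal → Set Ordinal),
        (∀ β < α, T β = T' β) → σ α T = σ α T') ∧
    (∀ (α : Ordinal) (T : Ordinal → Set Ordinal) (β : Ordinal), 0 < β → σ α T β < β) ∧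
    ∀ T : Ordinal → Set Ordinal,
      (∀ α, α < ζ →
        T α ⊆ S ∧ (∀ β < α, T α ⊆ T β) ∧ ∃ c, ∀ x ∈ T α, σ α T x = c) →
      ∃ α, α < ζ ∧ T α ∈ I

/-- Nonempty has a winning strategy in `PD_{<ζ}(I,S)`: responses `τ α g` to the
sequence `g` of regressive functions played by empty, which are always legal
(homogeneous subsets of `S` and of all previous responses) and never lie in `I`. -/
def NonemptyWinsPD (ζ : Ordinal) (I : Set (Set Ordinal)) (S : Set Ordinal) : Prop :=
  ∃ τ : Ordinal → (Ordinal → (Ordinal → Ordinal)) → Set Ordinal,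
    (∀ (α : Ordinal) (g g' : Ordinal → (Ordinal → Ordinal)),
        (∀ β ≤ α, g β = g' β) → τ α g = τ α g') ∧
    ∀ g : Ordinal → (Ordinal → Ordinal), (∀ α β, 0 < β → g α β < β) →
      ∀ α, α < ζ →
        τ α g ⊆ S ∧ (∀ β < α, τ α g ⊆ τ β g) ∧ (∃ c, ∀ x ∈ τ α g, g α x = c) ∧
        τ α g ∉ I

/-! ### The games of length `ω + 1` on `κ`: `BM_{≤ω}(I,S)` and the ideal game.

In `BM_{≤ω}(I,S)` the players move at the finite stages `n < ω` and empty wins a run iff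
`⋂_{n<ω} S_n ∈ I`; in the ideal game (played on `κ` itself) empty wins iff
`⋂_{n<ω} S_n = ∅`. -/

/-- `σ` is a winning strategy for empty in `BM_{≤ω}(I,S)`. -/
def EmptyBMOmegaStratWins (I : Set (Set Ordinal)) (S : Set Ordinal)
    (σ : ℕ → (ℕ → Set Ordinal) → Set Ordinal) : Prop :=
  (∀ (n : ℕ) (T T' : ℕ → Set Ordinal), (∀ m < n, T m = T' m) → σ n T = σ n T') ∧
  ∀ T : ℕ → Set Ordinal,
    (∀ n, (∀ m < n, T m ∉ I ∧ T m ⊆ σ m T) →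
      σ n T ∉ I ∧ σ n T ⊆ S ∧ ∀ m < n, σ n T ⊆ T m) ∧
    ((∀ n, T n ∉ I ∧ T n ⊆ σ n T) → (⋂ n, σ n T) ∈ I)

/-- Empty has a winning strategy in `BM_{≤ω}(I,S)`. -/
def EmptyWinsBMOmega (I : Set (Set Ordinal)) (S : Set Ordinal) : Prop :=
  ∃ σ, EmptyBMOmegaStratWins I S σ

/-- Nonempty has a winning strategy in `BM_{≤ω}(I,S)`. -/
def NonemptyWinsBMOmega (I : Set (Set Ordinal)) (S : Set Ordinal) : Prop :=
  ∃ τ : ℕ → (ℕ → Set Ordinal) → Set Ordinal,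
    (∀ (n : ℕ) (Sq Sq' : ℕ → Set Ordinal), (∀ m ≤ n, Sq m = Sq' m) → τ n Sq = τ n Sq') ∧
    ∀ Sq : ℕ → Set Ordinal,
      (∀ n, (∀ m ≤ n, Sq m ∉ I ∧ Sq m ⊆ S ∧ ∀ k < m, Sq m ⊆ Sq k ∩ τ k Sq) →
        τ n Sq ∉ I ∧ τ n Sq ⊆ Sq n) ∧
      ((∀ n, Sq n ∉ I ∧ Sq n ⊆ S ∧ ∀ k < n, Sq n ⊆ Sq k ∩ τ k Sq) →
        (⋂ n, Sq n) ∉ I)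

/-- Empty has a winning strategy in the ideal game on `I` (played on `κ`). -/
def EmptyWinsIdealGame (κ : Ordinal) (I : Set (Set Ordinal)) : Prop :=
  ∃ σ : ℕ → (ℕ → Set Ordinal) → Set Ordinal,
    (∀ (n : ℕ) (T T' : ℕ → Set Ordinal), (∀ m < n, T m = T' m) → σ n T = σ n T') ∧
    ∀ T : ℕ → Set Ordinal,
      (∀ n, (∀ m < n, T m ∉ I ∧ T m ⊆ σ m T) →
        σ n T ∉ I ∧ σ n T ⊆ Set.Iio κ ∧ ∀ m < n, σ n T ⊆ T m) ∧
      ((∀ n, T n ∉ I ∧ T n ⊆ σ n T) → (⋂ n, σ n T) = ∅)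

/-- Nonempty has a winning strategy in the ideal game on `I` (played on `κ`). -/
def NonemptyWinsIdealGame (κ : Ordinal) (I : Set (Set Ordinal)) : Prop :=
  ∃ τ : ℕ → (ℕ → Set Ordinal) → Set Ordinal,
    (∀ (n : ℕ) (Sq Sq' : ℕ → Set Ordinal), (∀ m ≤ n, Sq m = Sq' m) → τ n Sq = τ n Sq') ∧
    ∀ Sq : ℕ → Set Ordinal,
      (∀ n, (∀ m ≤ n, Sq m ∉ I ∧ Sq m ⊆ Set.Iio κ ∧ ∀ k < m, Sq m ⊆ Sq k ∩ τ k Sq) →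
        τ n Sq ∉ I ∧ τ n Sq ⊆ Sq n) ∧
      ((∀ n, Sq n ∉ I ∧ Sq n ⊆ Set.Iio κ ∧ ∀ k < n, Sq n ⊆ Sq k ∩ τ k Sq) →
        (⋂ n, Sq n).Nonempty)

/-! ### Auxiliary lemmas for statement 17 -/

open scoped Classical

universe u

lemma regUncountable_pos {κ : Ordinal} (hκ : RegUncountable κ) : 0 < κ := by
  rcases eq_zero_or_pos κ with h | h
  · exfalso
    have := hκ.2.1
    rw [h] at this
    simp at this
  · exact h

lemma regUncountable_isLimit {κ : Ordinal} (hκ : RegUncountable κ) : Order.IsSuccLimit κ := by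
  have h := Cardinal.isSuccLimit_ord (le_of_lt hκ.2.1)
  rwa [hκ.2.2] at h

/-- Fodor's lemma for a fine normal ideal. -/
lemma fodorI (κ : Ordinal) (I : Set (Set Ordinal)) (hκ0 : 0 < κ)
    (hI : FineNormalIdeal κ I) (A : Set Ordinal) (hAκ : A ⊆ Set.Iio κ) (hAI : A ∉ I)
    (f : Ordinal → Ordinal) (hf : ∀ β, 0 < β → f β < β) :
    ∃ c, {x | x ∈ A ∧ f x = c} ∉ I := by
  by_contra h
  push_neg at h
  obtain ⟨hsub, hsing, hdown, hunion, hproper⟩ := hI.1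
  have hDU := hI.2.2 (fun γ => {x | x ∈ A ∧ f x = γ}) (fun γ _ => h γ)
  apply hAI
  refine hdown A ({β : Ordinal | β < κ ∧ ∃ γ < β, β ∈ {x | x ∈ A ∧ f x = γ}} ∪ {0}) ?_
    (hunion _ hDU _ (hsing 0 hκ0))
  intro x hx
  by_cases hx0 : x = 0
  · right; simp [hx0]
  · left
    have hxpos : 0 < x := pos_iff_ne_zero.2 hx0
    exact ⟨hAκ hx, f x, hf x hxpos, hx, rfl⟩

/-- The nonstationary ideal is contained in every fine normal ideal. -/
lemma nsSubsetI (κ : Ordinal) (I : Set (Set Ordinal)) (hκ : RegUncountable κ)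
    (hI : FineNormalIdeal κ I) : ∀ A ∈ NSIdeal κ, A ∈ I := by
  obtain ⟨hsub, hsing, hdown, hunion, hproper⟩ := hI.1
  have hfine := hI.2.1
  have hnorm := hI.2.2
  intro A hA
  obtain ⟨hAκ, C, ⟨hCκ, hCclosed, hCunb⟩, hdisj⟩ := hA
  have hκ0 : 0 < κ := regUncountable_pos hκ
  have hκlim : Order.IsSuccLimit κ := regUncountable_isLimit hκ
  obtain ⟨c₀, hc₀C, _⟩ := hCunb 0 hκ0
  set nextC : Ordinal → Ordinal := fun γ => sInf (C ∩ Set.Ioi γ) with hnextC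
  have hnext : ∀ γ < κ, nextC γ ∈ C ∧ γ < nextC γ ∧ nextC γ < κ := by
    intro γ hγ
    obtain ⟨c, hcC, hγc⟩ := hCunb γ hγ
    have hne : (C ∩ Set.Ioi γ).Nonempty := ⟨c, hcC, hγc⟩
    have hmem := csInf_mem hne
    refine ⟨hmem.1, hmem.2, lt_of_le_of_lt (csInf_le (OrderBot.bddBelow _) ⟨hcC, hγc⟩)
      (hCκ hcC)⟩
  set Afam : Ordinal → Set Ordinal :=
    fun γ => if γ ∈ C ∧ γ < κ then Set.Iio (nextC γ) else ∅ with hAfamdef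
  have hAfam : ∀ γ, γ < κ → Afam γ ∈ I := by
    intro γ _
    by_cases hγ : γ ∈ C ∧ γ < κ
    · have hn := hnext γ hγ.2
      have : Afam γ = Set.Iio (nextC γ) := if_pos hγ
      rw [this]
      exact hfine _ (fun x hx => lt_trans hx hn.2.2) ⟨nextC γ, hn.2.2, subset_rfl⟩
    · have : Afam γ = ∅ := if_neg hγ
      rw [this]
      exact hdown ∅ {0} (Set.empty_subset _) (hsing 0 hκ0)
  have hDU := hnorm Afam hAfam
  have hbound : A ∩ Set.Iic c₀ ∈ I := by
    refine hfine _ (fun x hx => hAκ hx.1) ⟨c₀ + 1, by rw [Ordinal.add_one_eq_succ]; exact hκlim.succ_lt (hCκ hc₀C), ?_⟩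
    intro x hx
    exact lt_of_le_of_lt hx.2 (lt_add_one c₀)
  refine hdown A ({β : Ordinal | β < κ ∧ ∃ γ < β, β ∈ Afam γ} ∪ (A ∩ Set.Iic c₀)) ?_
    (hunion _ hDU _ hbound)
  intro x hx
  have hxκ := hAκ hx
  by_cases hxc : x ≤ c₀
  · right; exact ⟨hx, hxc⟩
  · left
    push_neg at hxc
    have hxC : x ∉ C := by
      intro hmem
      have : x ∈ A ∩ C := ⟨hx, hmem⟩
      rw [hdisj] at this
      exact this
    set γ := sSup (C ∩ Set.Iio x) with hγdef
    have hne : (C ∩ Set.Iio x).Nonempty := ⟨c₀, hc₀C, hxc⟩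
    have hγle : γ ≤ x := csSup_le hne (fun a ha => le_of_lt ha.2)
    have hγκ : γ < κ := lt_of_le_of_lt hγle hxκ
    have hγC : γ ∈ C := hCclosed _ Set.inter_subset_left hne hγκ
    have hγx : γ < x := lt_of_le_of_ne hγle (fun h => hxC (h ▸ hγC))
    obtain ⟨hnC, hγn, hnκ⟩ := hnext γ hγκ
    have hxn : x < nextC γ := by
      by_contra hle
      push_neg at hle
      have hne' : nextC γ ≠ x := fun h => hxC (h ▸ hnC)
      have h1 : nextC γ < x := lt_of_le_of_ne hle hne'
      have h2 : nextC γ ≤ γ :=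
        le_csSup ⟨x, fun a ha => le_of_lt ha.2⟩ ⟨hnC, h1⟩
      exact absurd h2 (not_le.2 hγn)
    refine ⟨hxκ, γ, hγx, ?_⟩
    have : Afam γ = Set.Iio (nextC γ) := if_pos ⟨hγC, hγκ⟩
    rw [this]
    exact hxn

/-- A choice of a dense-set refinement. -/
noncomputable def resp (D : Set (Set Ordinal)) (A : Set Ordinal) : Set Ordinal :=
  if h : ∃ B, B ∈ D ∧ B ⊆ A then h.choose else A

lemma resp_spec {D : Set (Set Ordinal)} {A : Set Ordinal}
    (h : ∃ B, B ∈ D ∧ B ⊆ A) : resp D A ∈ D ∧ resp D A ⊆ A := by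
  rw [resp, dif_pos h]
  exact h.choose_spec

/-- One step of the pressing-down strategy. -/
noncomputable def pdStep (I D : Set (Set Ordinal.{u})) (S : Set Ordinal.{u})
    (gα : Ordinal.{u} → Ordinal.{u}) (α : Ordinal.{u})
    (prev : Ordinal.{u} → Set Ordinal.{u}) :
    Set Ordinal.{u} :=
  if h : ∃ B, B ∈ D ∧ B ⊆ S ∧ (∀ β < α, B ⊆ prev β) ∧
      (∃ c, ∀ x ∈ B, gα x = c) ∧ B ∉ I then h.choose else ∅

lemma pdStep_spec {I D : Set (Set Ordinal.{u})} {S : Set Ordinal.{u}}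
    {gα : Ordinal.{u} → Ordinal.{u}} {α : Ordinal.{u}}
    {prev : Ordinal.{u} → Set Ordinal.{u}}
    (h : ∃ B, B ∈ D ∧ B ⊆ S ∧ (∀ β < α, B ⊆ prev β) ∧
      (∃ c, ∀ x ∈ B, gα x = c) ∧ B ∉ I) :
    pdStep I D S gα α prev ∈ D ∧ pdStep I D S gα α prev ⊆ S ∧
      (∀ β < α, pdStep I D S gα α prev ⊆ prev β) ∧
      (∃ c, ∀ x ∈ pdStep I D S gα α prev, gα x = c) ∧ pdStep I D S gα α prev ∉ I := by
  rw [pdStep, dif_pos h]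
  exact h.choose_spec

/-- The pressing-down strategy sequence. -/
noncomputable def pdSeq (I D : Set (Set Ordinal.{u})) (S : Set Ordinal.{u})
    (g : Ordinal.{u} → Ordinal.{u} → Ordinal.{u}) : Ordinal.{u} → Set Ordinal.{u} :=
  Ordinal.lt_wf.fix fun α rec =>
    pdStep I D S (g α) α (fun β => if h : β < α then rec β h else ∅)

lemma pdSeq_eq (I D : Set (Set Ordinal.{u})) (S : Set Ordinal.{u})
    (g : Ordinal.{u} → Ordinal.{u} → Ordinal.{u}) (α : Ordinal.{u}) :
    pdSeq I D S g α =
      pdStep I D S (g α) α (fun β => if β < α then pdSeq I D S g β else ∅) := by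
  conv_lhs => rw [pdSeq, WellFounded.fix_eq]
  rfl

lemma pdSeq_congr (I D : Set (Set Ordinal.{u})) (S : Set Ordinal.{u})
    (g g' : Ordinal.{u} → Ordinal.{u} → Ordinal.{u}) (α : Ordinal.{u})
    (h : ∀ β ≤ α, g β = g' β) : pdSeq I D S g α = pdSeq I D S g' α := by
  induction α using Ordinal.induction with
  | h α IH =>
    have hprev : (fun β => if β < α then pdSeq I D S g β else ∅) =
        (fun β => if β < α then pdSeq I D S g' β else ∅) := by
      funext β
      by_cases hβ : β < α
      · rw [if_pos hβ, if_pos hβ,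
          IH β hβ (fun γ hγ => h γ (le_trans hγ (le_of_lt hβ)))]
      · rw [if_neg hβ, if_neg hβ]
    rw [pdSeq_eq, pdSeq_eq, h α le_rfl, hprev]

lemma pdSeq_spec (κ θ : Ordinal) (I : Set (Set Ordinal))
    (hκ : RegUncountable κ)
    (hI : FineNormalIdeal κ I)
    (D : Set (Set Ordinal))
    (hDpos : ∀ A ∈ D, A ⊆ Set.Iio κ ∧ A ∉ I)
    (hdense : ∀ A : Set Ordinal, A ⊆ Set.Iio κ → A ∉ I → ∃ B ∈ D, B ⊆ A)
    (hclosed : ∀ δ < θ, ∀ Dseq : Ordinal → Set Ordinal,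
      (∀ ε, ε < δ → Dseq ε ∈ D) →
      (∀ ε ε', ε ≤ ε' → ε' < δ → Dseq ε' ⊆ Dseq ε) →
      ∃ B ∈ D, ∀ ε, ε < δ → B ⊆ Dseq ε)
    (S : Set Ordinal) (hSκ : S ⊆ Set.Iio κ) (hSI : S ∉ I)
    (g : Ordinal → Ordinal → Ordinal) (hg : ∀ α β, 0 < β → g α β < β) :
    ∀ α, α < θ → pdSeq I D S g α ∈ D ∧ pdSeq I D S g α ⊆ S ∧
      (∀ β < α, pdSeq I D S g α ⊆ pdSeq I D S g β) ∧
      (∃ c, ∀ x ∈ pdSeq I D S g α, g α x = c) := by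
  have hκ0 : 0 < κ := regUncountable_pos hκ
  intro α
  induction α using Ordinal.induction with
  | h α IH =>
    intro hαθ
    -- first obtain B₀ ∈ D, B₀ ⊆ S, B₀ ⊆ pdSeq β for all β < α
    have hB0 : ∃ B₀, B₀ ∈ D ∧ B₀ ⊆ S ∧ ∀ β < α, B₀ ⊆ pdSeq I D S g β := by
      by_cases hα0 : α = 0
      · obtain ⟨B₀, hB₀D, hB₀S⟩ := hdense S hSκ hSI
        exact ⟨B₀, hB₀D, hB₀S, fun β hβ => absurd hβ (by simp [hα0])⟩
      · have hα0' : 0 < α := pos_iff_ne_zero.2 hα0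
        obtain ⟨B₀, hB₀D, hB₀⟩ := hclosed α hαθ (fun β => pdSeq I D S g β)
          (fun ε hε => (IH ε hε (lt_trans hε hαθ)).1)
          (by
            intro ε ε' hεε' hε'
            rcases eq_or_lt_of_le hεε' with rfl | hlt
            · exact subset_rfl
            · exact (IH ε' hε' (lt_trans hε' hαθ)).2.2.1 ε hlt)
        exact ⟨B₀, hB₀D, (hB₀ 0 hα0').trans (IH 0 hα0' (lt_of_lt_of_le hα0' hαθ.le)).2.1,
          hB₀⟩
    obtain ⟨B₀, hB₀D, hB₀S, hB₀prev⟩ := hB0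
    obtain ⟨hB₀κ, hB₀I⟩ := hDpos B₀ hB₀D
    obtain ⟨c, hc⟩ := fodorI κ I hκ0 hI B₀ hB₀κ hB₀I (g α) (hg α)
    obtain ⟨B, hBD, hBB₁⟩ := hdense {x | x ∈ B₀ ∧ g α x = c}
      (fun x hx => hB₀κ hx.1) hc
    have hex : ∃ B', B' ∈ D ∧ B' ⊆ S ∧
        (∀ β < α, B' ⊆ (fun β => if β < α then pdSeq I D S g β else ∅) β) ∧
        (∃ c', ∀ x ∈ B', g α x = c') ∧ B' ∉ I := by
      refine ⟨B, hBD, fun x hx => hB₀S (hBB₁ hx).1, ?_, ⟨c, fun x hx => (hBB₁ hx).2⟩,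
        (hDpos B hBD).2⟩
      intro β hβ
      simp only [if_pos hβ]
      exact fun x hx => hB₀prev β hβ (hBB₁ hx).1
    have hspec := pdStep_spec hex
    rw [← pdSeq_eq] at hspec
    refine ⟨hspec.1, hspec.2.1, ?_, hspec.2.2.2.1⟩
    intro β hβ
    have := hspec.2.2.1 β hβ
    simpa only [if_pos hβ] using this

/-- If there is a family `D` of `I`-positive subsets of `κ` that is dense
(every `I`-positive set has a subset in `D`) and `<θ`-closed (every `⊆`-decreasing
sequence of fewer than `θ` members of `D` has a member of `D` below it), then nonempty
wins `BM_{<θ}(I,S)` for every `I`-positive `S ⊆ κ`, and consequently nonempty wins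
`PD_{<θ}(NS,S)`. -/
theorem statement17 (κ θ : Ordinal) (I : Set (Set Ordinal))
    (hκ : RegUncountable κ) (hθ : RegUncountable θ) (hθκ : θ ≤ κ)
    (hI : FineNormalIdeal κ I)
    (D : Set (Set Ordinal))
    (hDpos : ∀ A ∈ D, A ⊆ Set.Iio κ ∧ A ∉ I)
    (hdense : ∀ A : Set Ordinal, A ⊆ Set.Iio κ → A ∉ I → ∃ B ∈ D, B ⊆ A)
    (hclosed : ∀ δ < θ, ∀ Dseq : Ordinal → Set Ordinal,
      (∀ ε, ε < δ → Dseq ε ∈ D) →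
      (∀ ε ε', ε ≤ ε' → ε' < δ → Dseq ε' ⊆ Dseq ε) →
      ∃ B ∈ D, ∀ ε, ε < δ → B ⊆ Dseq ε) :
    ∀ S : Set Ordinal, S ⊆ Set.Iio κ → S ∉ I →
      NonemptyWinsBM θ I S ∧ NonemptyWinsPD θ (NSIdeal κ) S := by
  intro S hSκ hSI
  constructor
  · -- Banach–Mazur game
    refine ⟨fun α Sq => resp D (Sq α), ?_, ?_⟩
    · intro α Sq Sq' h
      show resp D (Sq α) = resp D (Sq' α)
      rw [h α le_rfl]
    · intro Sq α hα
      constructor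
      · intro hleg
        obtain ⟨h1, h2, _⟩ := hleg α le_rfl
        have hx := resp_spec (hdense (Sq α) (h2.trans hSκ) h1)
        exact ⟨(hDpos _ hx.1).2, hx.2⟩
      · intro hleg hInt
        have hDseq : ∀ ε < α, resp D (Sq ε) ∈ D ∧ resp D (Sq ε) ⊆ Sq ε := by
          intro ε hε
          exact resp_spec (hdense _ ((hleg ε hε).2.1.trans hSκ) (hleg ε hε).1)
        obtain ⟨B, hBD, hB⟩ := hclosed α hα (fun ε => resp D (Sq ε))
          (fun ε hε => (hDseq ε hε).1)
          (by
            intro ε ε' hεε' hε'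
            rcases eq_or_lt_of_le hεε' with rfl | hlt
            · exact subset_rfl
            · intro x hx
              have h1 : resp D (Sq ε') ⊆ Sq ε' := (hDseq ε' hε').2
              have h2 : Sq ε' ⊆ Sq ε ∩ resp D (Sq ε) := (hleg ε' hε').2.2 ε hlt
              exact (h2 (h1 hx)).2)
        apply (hDpos B hBD).2
        refine hI.1.2.2.1 B _ ?_ hInt
        intro x hx
        simp only [InterBelow, Set.mem_iInter, Set.mem_Iio]
        intro β hβ
        exact ⟨(hDseq β hβ).2 (hB β hβ hx), hB β hβ hx⟩
  · -- pressing-down game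
    refine ⟨fun α g => pdSeq I D S g α, ?_, ?_⟩
    · intro α g g' h
      exact pdSeq_congr I D S g g' α h
    · intro g hg α hα
      have hspec := pdSeq_spec κ θ I hκ hI D hDpos hdense hclosed S hSκ hSI g
        (fun α' β hβ => hg α' β hβ) α hα
      refine ⟨hspec.2.1, hspec.2.2.1, hspec.2.2.2, ?_⟩
      intro hNS
      exact (hDpos _ hspec.1).2 (nsSubsetI κ I hκ hI _ hNS)

end BMPDGames
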